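/- Let κ be an uncountable cardinal, {A_ξ : ξ < κ} an almost disjoint family of infinite subsets of ℕ, and S : ℓ∞^c(κ) → C(ℕ*) a bounded linear operator with S(1_{{ξ}}) = 1_{[A_ξ]} for all ξ < κ. Define r = inf over countable C ⊆ κ of sup{|S(f)(x)| : f ∈ ℓ∞^c(κ \ C), ‖f‖ = 1, x ∈ ⋃_{ξ∈κ\C}[A_ξ]}, and R = inf over countable C ⊆ κ of sup{|S(f)(x)| : f ∈ ℓ∞^c(κ \ C), ‖f‖ = 1, x ∉ ⋃_{ξ<κ}[A_ξ]}. Then R ≥ r. -/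

import Mathlib

set_option synthInstance.maxHeartbeats 400000
set_option maxHeartbeats 1000000

noncomputable section

open Set Filter
open scoped ENNReal

/-- `ℓ∞(κ)`: bounded real-valued functions on `κ` with the sup norm. -/
abbrev LinfK (κ : Type*) : Type _ := ↥(lp (fun _ : κ => ℝ) ∞)

/-- `ℓ∞^c(κ)`: the subspace of `ℓ∞(κ)` of countably supported functions. -/
def linfc (κ : Type*) : Submodule ℝ (LinfK κ) where
  carrier := {f | (Function.support (⇑f)).Countable}
  add_mem' := by
    intro f g hf hg
    refine Set.Countable.mono ?_ (hf.union hg)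
    rw [lp.coeFn_add]
    exact Function.support_add _ _
  zero_mem' := by
    simp [Function.support, lp.coeFn_zero]
  smul_mem' := by
    intro c f hf
    refine Set.Countable.mono ?_ hf
    rw [lp.coeFn_smul]
    exact Function.support_const_smul_subset c _

/-- The indicator function `1_F` of a countable `F ⊆ κ`, as an element of `ℓ∞^c(κ)`. -/
def indLinfc {κ : Type*} (F : Set κ) (hF : F.Countable) : ↥(linfc κ) :=
  ⟨⟨F.indicator (fun _ => (1 : ℝ)), memℓp_infty ⟨1, by
      rintro x ⟨i, rfl⟩
      by_cases h : i ∈ F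
      · simp [Set.indicator_of_mem h]
      · simp [Set.indicator_of_notMem h]⟩⟩,
    Set.Countable.mono (Set.support_indicator_subset) hF⟩

/-- The unit vector `1_{{ξ}}` of `ℓ∞^c(κ)`. -/
def unitVecC {κ : Type*} (ξ : κ) : ↥(linfc κ) :=
  indLinfc ({ξ} : Set κ) (Set.countable_singleton ξ)

/-- `ℕ* = βℕ \ ℕ`: the space of nonprincipal ultrafilters on `ℕ`. -/
def NStar : Type := {u : Ultrafilter ℕ // ∀ n : ℕ, u ≠ (pure n : Ultrafilter ℕ)}

instance : TopologicalSpace NStar := instTopologicalSpaceSubtype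

/-- The clopen subset `[A] ⊆ ℕ*` determined by `A ⊆ ℕ`. -/
def clopenOf (A : Set ℕ) : Set NStar := {u : NStar | A ∈ u.1}

theorem isClopen_clopenOf (A : Set ℕ) : IsClopen (clopenOf A) :=
  ⟨(ultrafilter_isClosed_basic A).preimage continuous_subtype_val,
   (ultrafilter_isOpen_basic A).preimage continuous_subtype_val⟩

/-- The characteristic function `1_{[A]} ∈ C(ℕ*)`. -/
def indBCF (A : Set ℕ) : BoundedContinuousFunction NStar ℝ :=
  BoundedContinuousFunction.indicator (clopenOf A) (isClopen_clopenOf A)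
open Topology

theorem NStar.not_mem_of_finite (x : NStar) {E : Set ℕ} (hE : E.Finite) : E ∉ x.1 := by
  intro h
  obtain ⟨a, -, ha⟩ := Ultrafilter.eq_pure_of_finite_mem hE h
  exact x.2 a ha

theorem clopenOf_inter (A B : Set ℕ) : clopenOf (A ∩ B) = clopenOf A ∩ clopenOf B := by
  ext u
  exact Filter.inter_mem_iff

theorem mem_clopenOf_unique {κ' : Type*} {A : κ' → Set ℕ} (hAD : ∀ ξ η : κ', ξ ≠ η → (A ξ ∩ A η).Finite)
    {x : NStar} {ξ η : κ'} (hx : x ∈ clopenOf (A ξ)) (hy : x ∈ clopenOf (A η)) : ξ = η := by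
  by_contra hne
  have : x ∈ clopenOf (A ξ ∩ A η) := by rw [clopenOf_inter]; exact ⟨hx, hy⟩
  exact NStar.not_mem_of_finite x (hAD ξ η hne) this

theorem exists_nonprincipal_mem {N : Set ℕ} (hN : N.Infinite) :
    ∃ V : Ultrafilter ℕ, N ∈ V ∧ (∀ E : Set ℕ, E.Finite → E ∉ V) := by
  have hne : (cofinite ⊓ 𝓟 N).NeBot := hN.cofinite_inf_principal_neBot
  refine ⟨Ultrafilter.of (cofinite ⊓ 𝓟 N), ?_, ?_⟩
  · exact (Ultrafilter.of_le _).trans inf_le_right (Filter.mem_principal_self N)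
  · intro E hE hEmem
    have h1 : Eᶜ ∈ Ultrafilter.of (cofinite ⊓ 𝓟 N) :=
      (Ultrafilter.of_le _).trans inf_le_left hE.compl_mem_cofinite
    exact absurd (Filter.inter_mem hEmem h1) (by simp [Filter.empty_notMem])

theorem clopenOf_nonempty {A : Set ℕ} (hA : A.Infinite) : (clopenOf A).Nonempty := by
  obtain ⟨V, hV1, hV2⟩ := exists_nonprincipal_mem hA
  refine ⟨⟨V, fun n hn => ?_⟩, hV1⟩
  exact hV2 {n} (Set.finite_singleton n) (hn ▸ rfl)

theorem isClosed_nonprincipal : IsClosed {u : Ultrafilter ℕ | ∀ n, u ≠ pure n} := by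
  have : {u : Ultrafilter ℕ | ∀ n, u ≠ pure n} = ⋂ n, {u : Ultrafilter ℕ | ({n} : Set ℕ) ∈ u}ᶜ := by
    ext u
    simp only [Set.mem_iInter, Set.mem_setOf_eq, Set.mem_compl_iff]
    refine forall_congr' fun n => ⟨fun h hm => ?_, fun h he => ?_⟩
    · obtain ⟨a, ha, hpa⟩ := Ultrafilter.eq_pure_of_finite_mem (Set.finite_singleton n) hm
      exact h (ha ▸ hpa)
    · exact h (he ▸ (by simp : ({n} : Set ℕ) ∈ (pure n : Ultrafilter ℕ)))
  rw [this]
  exact isClosed_iInter fun n => (ultrafilter_isOpen_basic _).isClosed_compl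

theorem NStar.exists_lim (x : ℕ → NStar) (V : Ultrafilter ℕ) :
    ∃ z : NStar, Filter.Tendsto x (V : Filter ℕ) (𝓝 z) := by
  have hc : IsCompact {u : Ultrafilter ℕ | ∀ n, u ≠ pure n} := isClosed_nonprincipal.isCompact
  have hle : ↑(V.map fun n => (x n).1) ≤ 𝓟 {u : Ultrafilter ℕ | ∀ n, u ≠ pure n} := by
    rw [Filter.le_principal_iff]
    exact Filter.mem_map.2 (Filter.univ_mem' fun n => (x n).2)
  obtain ⟨z, hz, hlim⟩ := hc.ultrafilter_le_nhds _ hle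
  refine ⟨⟨z, hz⟩, ?_⟩
  exact tendsto_subtype_rng.2 hlim

/-- constructor for elements of `linfc` bounded by 1 -/
def mk1 {κ : Type*} (g : κ → ℝ) (hb : ∀ i, ‖g i‖ ≤ 1)
    (hc : (Function.support g).Countable) : ↥(linfc κ) :=
  ⟨⟨g, memℓp_infty ⟨1, by rintro y ⟨i, rfl⟩; exact hb i⟩⟩, hc⟩

theorem mk1_coe {κ : Type*} (g : κ → ℝ) (hb : ∀ i, ‖g i‖ ≤ 1)
    (hc : (Function.support g).Countable) :
    (((mk1 g hb hc : ↥(linfc κ)) : LinfK κ) : κ → ℝ) = g := rfl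

theorem norm_le_one_mk1 {κ : Type*} (g : κ → ℝ) (hb : ∀ i, ‖g i‖ ≤ 1)
    (hc : (Function.support g).Countable) :
    ‖(mk1 g hb hc : ↥(linfc κ))‖ ≤ 1 :=
  lp.norm_le_of_forall_le zero_le_one hb

theorem norm_unitVecC {κ : Type*} (ξ : κ) : ‖unitVecC ξ‖ = 1 := by
  apply le_antisymm
  · refine lp.norm_le_of_forall_le zero_le_one fun i => ?_
    by_cases h : i ∈ ({ξ} : Set κ)
    · simp [unitVecC, indLinfc, Set.indicator_of_mem h]
    · simp [unitVecC, indLinfc, Set.indicator_of_notMem h]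
  · have := lp.norm_apply_le_norm (ENNReal.top_ne_zero) ((unitVecC ξ : ↥(linfc κ)) : LinfK κ) ξ
    simpa [unitVecC, indLinfc] using this
/-- Rosenthal-type disjointification lemma for superadditive set functions. -/
theorem rosenthal (w : ℕ → Set ℕ → ℝ) (M ε : ℝ) (hε : 0 < ε)
    (hmono : ∀ n, Monotone (w n))
    (h0 : ∀ n I, 0 ≤ w n I)
    (hM : ∀ n I, w n I ≤ M)
    (hsup : ∀ n I J, Disjoint I J → w n I + w n J ≤ w n (I ∪ J)) :
    ∃ N : Set ℕ, N.Infinite ∧ ∀ n ∈ N, w n (N \ {n}) ≤ ε := by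
  classical
  by_contra hcon
  push_neg at hcon
  have key : ∀ k : ℕ, ∃ (T : Set ℕ) (B : ℕ → Set ℕ) (F : ℕ → ℕ → Set ℕ),
      T.Infinite ∧ (∀ n ∈ T, n ∈ B n) ∧
      (∀ m ∈ T, ∀ n ∈ T, m ≠ n → Disjoint (B m) (B n)) ∧
      (∀ n ∈ T, ∀ i < k, ε ≤ w n (F n i)) ∧
      (∀ n ∈ T, ∀ i < k, ∀ j < k, i ≠ j → Disjoint (F n i) (F n j)) ∧
      (∀ n ∈ T, ∀ i < k, ∀ m ∈ T, Disjoint (F n i) (B m)) := by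
    intro k
    induction k with
    | zero =>
      exact ⟨Set.univ, fun n => {n}, fun _ _ => ∅, Set.infinite_univ,
        fun n _ => rfl, fun m _ n _ h => Set.disjoint_singleton.2 h,
        fun n _ i hi => absurd hi (by omega), fun n _ i hi => absurd hi (by omega),
        fun n _ i hi => absurd hi (by omega)⟩
    | succ k ih =>
      obtain ⟨T, B, F, hTinf, hmem, hdisjB, hFε, hFd, hFB⟩ := ih
      haveI : Infinite ↥T := hTinf.to_subtype
      obtain ⟨d⟩ := nonempty_denumerable ↥T
      set e : ℕ × ℕ → ℕ := fun p => ((Denumerable.eqv ↥T).symm ((Denumerable.eqv (ℕ × ℕ)) p) : ℕ) with he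
      have einj : Function.Injective e := by
        intro p q h
        have := Subtype.val_injective h
        exact (Denumerable.eqv (ℕ × ℕ)).injective
          ((Denumerable.eqv ↥T).symm.injective this)
      have heT : ∀ p, e p ∈ T := fun p => ((Denumerable.eqv ↥T).symm _).2
      set P : ℕ → Set ℕ := fun j => Set.range (fun i => e (j, i)) with hP
      have hPT : ∀ j, P j ⊆ T := by rintro j n ⟨i, rfl⟩; exact heT _
      have hPinf : ∀ j, (P j).Infinite :=
        fun j => Set.infinite_range_of_injective (fun a b hab => by
          simpa using (Prod.mk.injEq _ _ _ _ ▸ (einj hab)).2)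
      have hPdisj : ∀ j j', j ≠ j' → Disjoint (P j) (P j') := by
        intro j j' hjj
        rw [Set.disjoint_iff_inter_eq_empty]
        ext n
        simp only [Set.mem_inter_iff, Set.mem_empty_iff_false, iff_false, hP]
        rintro ⟨⟨i, rfl⟩, ⟨i', hi'⟩⟩
        exact hjj ((Prod.mk.injEq _ _ _ _ ▸ (einj hi')).1).symm
      choose nn hnmem hnval using fun j => hcon (P j) (hPinf j)
      have nninj : Function.Injective nn := by
        intro j j' h
        by_contra hjj
        exact Set.disjoint_iff_inter_eq_empty.1 (hPdisj j j' hjj) |>.subset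
          ⟨hnmem j, h ▸ hnmem j'⟩
      set T' : Set ℕ := Set.range nn with hT'
      have hT'sub : T' ⊆ T := by rintro n ⟨j, rfl⟩; exact hPT _ (hnmem j)
      have hjsel : ∀ n ∈ T', ∃ j, nn j = n := fun n hn => hn
      set jsel : ℕ → ℕ := fun n => if h : ∃ j, nn j = n then h.choose else 0 with hjs
      have hjsel' : ∀ n ∈ T', nn (jsel n) = n := by
        intro n hn
        have h : ∃ j, nn j = n := hn
        simp only [hjs]
        rw [dif_pos h]
        exact h.choose_spec
      refine ⟨T', B, fun n i => if i = k then ⋃ m ∈ (P (jsel n)) \ {n}, B m else F n i,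
        Set.infinite_range_of_injective nninj, fun n hn => hmem n (hT'sub hn),
        fun m hm n hn h => hdisjB m (hT'sub hm) n (hT'sub hn) h, ?_, ?_, ?_⟩
      · intro n hn i hi
        dsimp only
        by_cases hik : i = k
        · rw [if_pos hik]
          have h1 : ε < w n (P (jsel n) \ {n}) := by
            have := hnval (jsel n)
            rwa [hjsel' n hn] at this
          refine le_trans (le_of_lt h1) (hmono n ?_)
          intro m hm
          exact Set.mem_biUnion hm (hmem m (hPT _ hm.1))
        · rw [if_neg hik]
          exact hFε n (hT'sub hn) i (by omega)
      · intro n hn i hi j hj hij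
        dsimp only
        have key2 : ∀ i < k, Disjoint (F n i) (⋃ m ∈ (P (jsel n)) \ {n}, B m) := by
          intro i hik
          rw [Set.disjoint_iUnion₂_right]
          intro m hm
          exact hFB n (hT'sub hn) i hik m (hPT _ hm.1)
        by_cases hik : i = k
        · rw [if_pos hik, if_neg (by omega : j ≠ k)]
          exact ((key2 j (by omega)) ).symm
        · rw [if_neg hik]
          by_cases hjk : j = k
          · rw [if_pos hjk]
            exact key2 i (by omega)
          · rw [if_neg hjk]
            exact hFd n (hT'sub hn) i (by omega) j (by omega) hij
      · intro n hn i hi m hm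
        dsimp only
        by_cases hik : i = k
        · rw [if_pos hik]
          rw [Set.disjoint_iUnion₂_left]
          intro m' hm'
          have hm'T : m' ∈ T := hPT _ hm'.1
          have hmm' : m' ≠ m := by
            rintro rfl
            obtain ⟨j'', rfl⟩ := hm
            by_cases hj0 : j'' = jsel n
            · refine hm'.2 ?_
              rw [hj0, hjsel' n hn]
              rfl
            · exact Set.disjoint_left.1 (hPdisj j'' (jsel n) hj0) (hnmem j'') hm'.1
          exact hdisjB m' hm'T m (hT'sub hm) hmm'
        · rw [if_neg hik]
          exact hFB n (hT'sub hn) i (by omega) m (hT'sub hm)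
  obtain ⟨k, hk⟩ := exists_nat_gt (M / ε)
  obtain ⟨T, B, F, hTinf, -, -, hFε, hFd, -⟩ := key k
  obtain ⟨n, hn⟩ := hTinf.nonempty
  have main : ∀ j ≤ k, (j : ℝ) * ε ≤ w n (⋃ i ∈ Finset.range j, F n i) := by
    intro j
    induction j with
    | zero => intro _; simpa using h0 n _
    | succ j ihj =>
      intro hjk
      have hdis : Disjoint (⋃ i ∈ Finset.range j, F n i) (F n j) := by
        rw [Set.disjoint_iUnion₂_left]
        intro i hi
        have hij : i < j := Finset.mem_range.1 hi
        exact hFd n hn i (by omega) j (by omega) (by omega)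
      have hstep := hsup n _ _ hdis
      have hufe : (⋃ i ∈ Finset.range (j+1), F n i)
          = (⋃ i ∈ Finset.range j, F n i) ∪ F n j := by
        rw [Finset.range_add_one, Finset.set_biUnion_insert]
        exact Set.union_comm _ _
      rw [hufe]
      push_cast
      have hε' := hFε n hn j (by omega)
      have hind := ihj (by omega)
      linarith
  have hfin := main k le_rfl
  have hbound := hM n (⋃ i ∈ Finset.range k, F n i)
  have hMk : M < k * ε := by
    rw [div_lt_iff₀ hε] at hk
    linarith
  linarith
theorem linfc_apply_le_norm {κ : Type*} (f : ↥(linfc κ)) (i : κ) :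
    ‖((f : LinfK κ) : κ → ℝ) i‖ ≤ ‖f‖ :=
  lp.norm_apply_le_norm ENNReal.top_ne_zero (f : LinfK κ) i

theorem linfc_norm_le_one {κ : Type*} (f : ↥(linfc κ))
    (h : ∀ i, ‖((f : LinfK κ) : κ → ℝ) i‖ ≤ 1) : ‖f‖ ≤ 1 :=
  lp.norm_le_of_forall_le zero_le_one h

theorem linfc_support_countable {κ : Type*} (f : ↥(linfc κ)) :
    (Function.support ((f : LinfK κ) : κ → ℝ)).Countable := f.2

/-- the `L`-value set for a countable `C`. -/
def LVset {κ : Type*} (A : κ → Set ℕ)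
    (S : ↥(linfc κ) →L[ℝ] BoundedContinuousFunction NStar ℝ) (C : Set κ) : Set ℝ :=
  { v : ℝ | ∃ f : ↥(linfc κ),
      (∀ ξ : κ, ((f : LinfK κ) : κ → ℝ) ξ ≠ 0 → ξ ∉ C) ∧ ‖f‖ = 1 ∧
      ∃ x : NStar, (∃ ξ : κ, ξ ∉ C ∧ x ∈ clopenOf (A ξ)) ∧ v = |S f x| }

/-- the `R`-value set for a countable `C`. -/
def RVset {κ : Type*} (A : κ → Set ℕ)
    (S : ↥(linfc κ) →L[ℝ] BoundedContinuousFunction NStar ℝ) (C : Set κ) : Set ℝ :=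
  { v : ℝ | ∃ f : ↥(linfc κ),
      (∀ ξ : κ, ((f : LinfK κ) : κ → ℝ) ξ ≠ 0 → ξ ∉ C) ∧ ‖f‖ = 1 ∧
      ∃ x : NStar, (∀ ξ : κ, x ∉ clopenOf (A ξ)) ∧ v = |S f x| }
theorem key_lemma {κ : Type*} [Uncountable κ] (A : κ → Set ℕ)
    (hAinf : ∀ ξ, (A ξ).Infinite)
    (hAD : ∀ ξ η, ξ ≠ η → (A ξ ∩ A η).Finite)
    (S : ↥(linfc κ) →L[ℝ] BoundedContinuousFunction NStar ℝ)
    (C : Set κ) (hC : C.Countable) :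
    sInf {t : ℝ | ∃ C : Set κ, C.Countable ∧ t = sSup (LVset A S C)} ≤ sSup (RVset A S C) := by
  classical
  set r := sInf {t : ℝ | ∃ C : Set κ, C.Countable ∧ t = sSup (LVset A S C)} with hrdef
  have hSbound : ∀ (g : ↥(linfc κ)) (x : NStar), |S g x| ≤ ‖S‖ * ‖g‖ := by
    intro g x
    calc |S g x| = ‖S g x‖ := (Real.norm_eq_abs _).symm
      _ ≤ ‖S g‖ := BoundedContinuousFunction.norm_coe_le_norm _ x
      _ ≤ ‖S‖ * ‖g‖ := S.le_opNorm g
  have hexnot : ∀ C' : Set κ, C'.Countable → ∃ ξ : κ, ξ ∉ C' := by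
    intro C' hC'
    by_contra h
    push_neg at h
    have huniv : C' = Set.univ := Set.eq_univ_of_forall h
    rw [huniv, Set.countable_univ_iff] at hC'
    exact not_countable hC'
  have hunit_supp : ∀ (ξ η : κ), ((unitVecC ξ : LinfK κ) : κ → ℝ) η ≠ 0 → η = ξ := by
    intro ξ η h
    by_contra hne
    refine h ?_
    show Set.indicator ({ξ} : Set κ) (fun _ => (1:ℝ)) η = 0
    exact Set.indicator_of_notMem (by simp [hne]) _
  have hLV_ne : ∀ C' : Set κ, C'.Countable → (LVset A S C').Nonempty := by
    intro C' hC'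
    obtain ⟨ξ, hξ⟩ := hexnot C' hC'
    obtain ⟨x, hx⟩ := clopenOf_nonempty (hAinf ξ)
    exact ⟨|S (unitVecC ξ) x|, unitVecC ξ, fun η h => (hunit_supp ξ η h) ▸ hξ,
      norm_unitVecC ξ, x, ⟨ξ, hξ, hx⟩, rfl⟩
  have hLV_bdd : ∀ C' : Set κ, BddAbove (LVset A S C') := by
    intro C'
    refine ⟨‖S‖, ?_⟩
    rintro v ⟨f, -, hf1, x, -, rfl⟩
    have h := hSbound f x
    rwa [hf1, mul_one] at h
  have hRV_bdd : ∀ C' : Set κ, BddAbove (RVset A S C') := by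
    intro C'
    refine ⟨‖S‖, ?_⟩
    rintro v ⟨f, -, hf1, x, -, rfl⟩
    have h := hSbound f x
    rwa [hf1, mul_one] at h
  have hr_le : ∀ C' : Set κ, C'.Countable → r ≤ sSup (LVset A S C') := by
    intro C' hC'
    refine csInf_le ⟨0, ?_⟩ ⟨C', hC', rfl⟩
    rintro t ⟨D, hD, rfl⟩
    refine Real.sSup_nonneg ?_
    rintro v ⟨f, -, -, x, -, rfl⟩
    exact abs_nonneg _
  -- reduce to: ∀ δ > 0, r ≤ sSup (RVset A S C) + 2 * δ
  suffices h2δ : ∀ δ : ℝ, 0 < δ → r ≤ sSup (RVset A S C) + 2 * δ by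
    by_contra hlt
    push_neg at hlt
    have hδ := h2δ ((r - sSup (RVset A S C)) / 4) (by linarith)
    linarith
  intro δ hδpos
  -- the one-step choice
  have hstep : ∀ C' : Set κ, C'.Countable → ∃ p : ↥(linfc κ) × κ × NStar,
      (∀ η : κ, ((p.1 : LinfK κ) : κ → ℝ) η ≠ 0 → η ∉ C') ∧ ‖p.1‖ = 1 ∧
      p.2.1 ∉ C' ∧ p.2.2 ∈ clopenOf (A p.2.1) ∧ r - δ < |S p.1 p.2.2| := by
    intro C' hC'
    have h1 : r - δ < sSup (LVset A S C') := lt_of_lt_of_le (by linarith) (hr_le C' hC')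
    obtain ⟨v, hv, hlt⟩ := exists_lt_of_lt_csSup (hLV_ne C' hC') h1
    obtain ⟨f, hfsupp, hfnorm, x, ⟨ξ, hξ, hx⟩, rfl⟩ := hv
    exact ⟨⟨f, ξ, x⟩, hfsupp, hfnorm, hξ, hx, hlt⟩
  -- recursion building the sequences
  set g : {s : Set κ // s.Countable} → {s : Set κ // s.Countable} := fun s =>
    ⟨s.1 ∪ Function.support (((hstep s.1 s.2).choose.1 : LinfK κ) : κ → ℝ)
        ∪ {(hstep s.1 s.2).choose.2.1},
     (s.2.union (linfc_support_countable _)).union (Set.countable_singleton _)⟩ with hgdef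
  set u : ℕ → {s : Set κ // s.Countable} := fun n => g^[n] ⟨C, hC⟩ with hu
  have husucc : ∀ n, u (n + 1) = g (u n) := fun n => Function.iterate_succ_apply' g n _
  set fs : ℕ → ↥(linfc κ) := fun n => (hstep (u n).1 (u n).2).choose.1 with hfs
  set ξs : ℕ → κ := fun n => (hstep (u n).1 (u n).2).choose.2.1 with hξs
  set xs : ℕ → NStar := fun n => (hstep (u n).1 (u n).2).choose.2.2 with hxs
  have hspec := fun n => (hstep (u n).1 (u n).2).choose_spec
  have hfsupp : ∀ n η, ((fs n : LinfK κ) : κ → ℝ) η ≠ 0 → η ∉ (u n).1 := fun n => (hspec n).1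
  have hfnorm : ∀ n, ‖fs n‖ = 1 := fun n => (hspec n).2.1
  have hξnot : ∀ n, ξs n ∉ (u n).1 := fun n => (hspec n).2.2.1
  have hxmem : ∀ n, xs n ∈ clopenOf (A (ξs n)) := fun n => (hspec n).2.2.2.1
  have hval : ∀ n, r - δ < |S (fs n) (xs n)| := fun n => (hspec n).2.2.2.2
  have hu_unfold : ∀ n, (u (n+1)).1
      = (u n).1 ∪ Function.support ((fs n : LinfK κ) : κ → ℝ) ∪ {ξs n} := by
    intro n
    rw [husucc n]
  have humono : ∀ m n, m ≤ n → (u m).1 ⊆ (u n).1 := by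
    intro m n h
    induction n, h using Nat.le_induction with
    | base => exact subset_rfl
    | succ n hmn ih =>
      refine ih.trans ?_
      rw [hu_unfold n]
      exact Set.subset_union_left.trans Set.subset_union_left
  have hCsub : ∀ n, C ⊆ (u n).1 := fun n => humono 0 n n.zero_le
  have hsupp_sub : ∀ n, Function.support ((fs n : LinfK κ) : κ → ℝ) ⊆ (u (n+1)).1 := by
    intro n
    rw [hu_unfold n]
    exact Set.subset_union_right.trans Set.subset_union_left
  have hξmem : ∀ n, ξs n ∈ (u (n+1)).1 := by
    intro n
    rw [hu_unfold n]
    exact Set.mem_union_right _ rfl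
  have hdisj : ∀ m n, m ≠ n → ∀ i, ((fs m : LinfK κ) : κ → ℝ) i ≠ 0 →
      ((fs n : LinfK κ) : κ → ℝ) i ≠ 0 → False := by
    have key : ∀ m n, m < n → ∀ i, ((fs m : LinfK κ) : κ → ℝ) i ≠ 0 →
        ((fs n : LinfK κ) : κ → ℝ) i ≠ 0 → False := by
      intro m n h i hm hn
      exact hfsupp n i hn (humono (m+1) n h (hsupp_sub m hm))
    intro m n hmn i hm hn
    rcases lt_or_gt_of_ne hmn with h | h
    · exact key m n h i hm hn
    · exact key n m h i hn hm
  have hξinj : Function.Injective ξs := by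
    have key : ∀ m n, m < n → ξs m ≠ ξs n := by
      intro m n h heq
      exact hξnot n (heq ▸ humono (m+1) n h (hξmem m))
    intro m n heq
    by_contra hmn
    rcases lt_or_gt_of_ne hmn with h | h
    · exact key m n h heq
    · exact key n m h heq.symm
  -- the W-sets and superadditive sup-functions
  set W : ℕ → Set ℕ → Set ℝ := fun n I => { v : ℝ | ∃ h : ↥(linfc κ), ‖h‖ ≤ 1 ∧
      (∀ i, ((h : LinfK κ) : κ → ℝ) i ≠ 0 → ∃ m ∈ I, ((fs m : LinfK κ) : κ → ℝ) i ≠ 0) ∧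
      v = |S h (xs n)| } with hWdef
  have hzero_mem : ∀ n I, (0:ℝ) ∈ W n I := by
    intro n I
    refine ⟨0, by simp, fun i hi => absurd ?_ hi, by simp⟩
    show ((0 : LinfK κ) : κ → ℝ) i = 0
    simp
  have hWbdd : ∀ n I, BddAbove (W n I) := by
    intro n I
    refine ⟨‖S‖, ?_⟩
    rintro v ⟨h, hh1, -, rfl⟩
    exact (hSbound h (xs n)).trans (mul_le_of_le_one_right (norm_nonneg S) hh1)
  have hWne : ∀ n I, (W n I).Nonempty := fun n I => ⟨0, hzero_mem n I⟩
  set w : ℕ → Set ℕ → ℝ := fun n I => sSup (W n I) with hwdef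
  have hwmono : ∀ n, Monotone (w n) := by
    intro n I J hIJ
    refine csSup_le_csSup (hWbdd n J) (hWne n I) ?_
    rintro v ⟨h, hh1, hhs, rfl⟩
    exact ⟨h, hh1, fun i hi => (hhs i hi).imp (fun m hm => ⟨hIJ hm.1, hm.2⟩), rfl⟩
  have hw0 : ∀ n I, 0 ≤ w n I := fun n I => le_csSup (hWbdd n I) (hzero_mem n I)
  have hwM : ∀ n I, w n I ≤ ‖S‖ := by
    intro n I
    refine csSup_le (hWne n I) ?_
    rintro v ⟨h, hh1, -, rfl⟩
    exact (hSbound h (xs n)).trans (mul_le_of_le_one_right (norm_nonneg S) hh1)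
  have hwsup : ∀ n I J, Disjoint I J → w n I + w n J ≤ w n (I ∪ J) := by
    intro n I J hIJ
    have h2 : ∀ a ∈ W n I, ∀ b ∈ W n J, a + b ≤ w n (I ∪ J) := by
      rintro a ⟨ga, ha1, has, rfl⟩ b ⟨gb, hb1, hbs, rfl⟩
      -- supports of ga and gb are disjoint
      have hgdisj : ∀ i, ((ga : LinfK κ) : κ → ℝ) i ≠ 0 →
          ((gb : LinfK κ) : κ → ℝ) i ≠ 0 → False := by
        intro i hai hbi
        obtain ⟨m, hmI, hmi⟩ := has i hai
        obtain ⟨m', hmJ, hmi'⟩ := hbs i hbi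
        rcases eq_or_ne m m' with rfl | hne
        · exact Set.disjoint_left.1 hIJ hmI hmJ
        · exact hdisj m m' hne i hmi hmi'
      have hcoe_add : ∀ i, (((ga + gb : ↥(linfc κ)) : LinfK κ) : κ → ℝ) i
          = ((ga : LinfK κ) : κ → ℝ) i + ((gb : LinfK κ) : κ → ℝ) i := by
        intro i
        have : ((ga + gb : ↥(linfc κ)) : LinfK κ) = (ga : LinfK κ) + (gb : LinfK κ) := rfl
        rw [this, lp.coeFn_add]
        rfl
      have hcoe_sub : ∀ i, (((ga - gb : ↥(linfc κ)) : LinfK κ) : κ → ℝ) i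
          = ((ga : LinfK κ) : κ → ℝ) i - ((gb : LinfK κ) : κ → ℝ) i := by
        intro i
        have : ((ga - gb : ↥(linfc κ)) : LinfK κ) = (ga : LinfK κ) - (gb : LinfK κ) := rfl
        rw [this, lp.coeFn_sub]
        rfl
      have hpt : ∀ i, ‖((ga : LinfK κ) : κ → ℝ) i + ((gb : LinfK κ) : κ → ℝ) i‖ ≤ 1 ∧
          ‖((ga : LinfK κ) : κ → ℝ) i - ((gb : LinfK κ) : κ → ℝ) i‖ ≤ 1 := by
        intro i
        by_cases hai : ((ga : LinfK κ) : κ → ℝ) i = 0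
        · rw [hai]
          constructor
          · rw [zero_add]; exact (linfc_apply_le_norm gb i).trans hb1
          · rw [zero_sub, norm_neg]; exact (linfc_apply_le_norm gb i).trans hb1
        · have hbi : ((gb : LinfK κ) : κ → ℝ) i = 0 := by
            by_contra hbi
            exact hgdisj i hai hbi
          rw [hbi]
          constructor
          · rw [add_zero]; exact (linfc_apply_le_norm ga i).trans ha1
          · rw [sub_zero]; exact (linfc_apply_le_norm ga i).trans ha1
      have hsupcond : ∀ (gg : ↥(linfc κ)), (∀ i, ((gg : LinfK κ) : κ → ℝ) i ≠ 0 →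
          ((ga : LinfK κ) : κ → ℝ) i ≠ 0 ∨ ((gb : LinfK κ) : κ → ℝ) i ≠ 0) →
          ∀ i, ((gg : LinfK κ) : κ → ℝ) i ≠ 0 →
            ∃ m ∈ I ∪ J, ((fs m : LinfK κ) : κ → ℝ) i ≠ 0 := by
        intro gg hgg i hi
        rcases hgg i hi with h | h
        · exact (has i h).imp fun m hm => ⟨Set.mem_union_left _ hm.1, hm.2⟩
        · exact (hbs i h).imp fun m hm => ⟨Set.mem_union_right _ hm.1, hm.2⟩
      have hmem1 : |S (ga + gb) (xs n)| ∈ W n (I ∪ J) := by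
        refine ⟨ga + gb, linfc_norm_le_one _ (fun i => by rw [hcoe_add i]; exact (hpt i).1),
          hsupcond _ (fun i hi => ?_), rfl⟩
        rw [hcoe_add i] at hi
        by_contra hcon
        push_neg at hcon
        rw [hcon.1, hcon.2, add_zero] at hi
        exact hi rfl
      have hmem2 : |S (ga - gb) (xs n)| ∈ W n (I ∪ J) := by
        refine ⟨ga - gb, linfc_norm_le_one _ (fun i => by rw [hcoe_sub i]; exact (hpt i).2),
          hsupcond _ (fun i hi => ?_), rfl⟩
        rw [hcoe_sub i] at hi
        by_contra hcon
        push_neg at hcon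
        rw [hcon.1, hcon.2, sub_zero] at hi
        exact hi rfl
      have hv1 : S (ga + gb) (xs n) = S ga (xs n) + S gb (xs n) := by
        rw [map_add]
        rfl
      have hv2 : S (ga - gb) (xs n) = S ga (xs n) - S gb (xs n) := by
        rw [map_sub]
        rfl
      set p := S ga (xs n)
      set q := S gb (xs n)
      have hle1 : |p + q| ≤ w n (I ∪ J) := le_csSup (hWbdd n _) (hv1 ▸ hmem1)
      have hle2 : |p - q| ≤ w n (I ∪ J) := le_csSup (hWbdd n _) (hv2 ▸ hmem2)
      rcases abs_cases p with ⟨h1, -⟩ | ⟨h1, -⟩ <;> rcases abs_cases q with ⟨h2, -⟩ | ⟨h2, -⟩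
      · have := le_abs_self (p + q); linarith
      · have := le_abs_self (p - q); linarith
      · have := neg_abs_le (p - q); linarith
      · have := neg_abs_le (p + q); linarith
    have hI : sSup (W n I) ≤ w n (I ∪ J) - w n J := by
      refine csSup_le (hWne n I) fun a ha => ?_
      have hJ : sSup (W n J) ≤ w n (I ∪ J) - a :=
        csSup_le (hWne n J) fun b hb => by linarith [h2 a ha b hb]
      have hJ' : w n J ≤ w n (I ∪ J) - a := hJ
      linarith
    have hI' : w n I ≤ w n (I ∪ J) - w n J := hI
    linarith
  obtain ⟨N, hNinf, hNval⟩ := rosenthal w ‖S‖ δ hδpos hwmono hw0 hwM hwsup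
  -- the combined function
  set Ff : κ → ℝ := fun i => if h : ∃ m, m ∈ N ∧ ((fs m : LinfK κ) : κ → ℝ) i ≠ 0
      then ((fs h.choose : LinfK κ) : κ → ℝ) i else 0 with hFfdef
  have hFb : ∀ i, ‖Ff i‖ ≤ 1 := by
    intro i
    rw [hFfdef]
    dsimp only
    split_ifs with h
    · exact (linfc_apply_le_norm _ i).trans (le_of_eq (hfnorm _))
    · simp
  have hFsupp_count : (Function.support Ff).Countable := by
    refine Set.Countable.mono ?_
      (Set.countable_iUnion (fun m : ℕ => linfc_support_countable (fs m)))
    intro i hi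
    rw [Function.mem_support] at hi
    by_cases h : ∃ m, m ∈ N ∧ ((fs m : LinfK κ) : κ → ℝ) i ≠ 0
    · exact Set.mem_iUnion.2 ⟨h.choose, h.choose_spec.2⟩
    · rw [hFfdef] at hi
      dsimp only at hi
      rw [dif_neg h] at hi
      exact absurd rfl hi
  set fbig : ↥(linfc κ) := mk1 Ff hFb hFsupp_count with hfbigdef
  have hfbig_coe : ∀ i, ((fbig : LinfK κ) : κ → ℝ) i = Ff i := fun i => rfl
  have huniq : ∀ (i : κ) (m m' : ℕ), ((fs m : LinfK κ) : κ → ℝ) i ≠ 0 →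
      ((fs m' : LinfK κ) : κ → ℝ) i ≠ 0 → m = m' := by
    intro i m m' h1 h2
    by_contra hne
    exact hdisj m m' hne i h1 h2
  have hFeq : ∀ m ∈ N, ∀ i, ((fs m : LinfK κ) : κ → ℝ) i ≠ 0 →
      Ff i = ((fs m : LinfK κ) : κ → ℝ) i := by
    intro m hm i hi
    have h : ∃ m, m ∈ N ∧ ((fs m : LinfK κ) : κ → ℝ) i ≠ 0 := ⟨m, hm, hi⟩
    rw [hFfdef]
    dsimp only
    rw [dif_pos h, huniq i h.choose m h.choose_spec.2 hi]
  obtain ⟨n₀, hn₀⟩ := hNinf.nonempty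
  have hfbig_norm : ‖fbig‖ = 1 := by
    refine le_antisymm (linfc_norm_le_one _ (fun i => (hfbig_coe i) ▸ hFb i)) ?_
    have hpt : ∀ i, ‖((fs n₀ : LinfK κ) : κ → ℝ) i‖ ≤ ‖((fbig : LinfK κ) : κ → ℝ) i‖ := by
      intro i
      by_cases h : ((fs n₀ : LinfK κ) : κ → ℝ) i = 0
      · rw [h]
        simp
      · rw [hfbig_coe i, hFeq n₀ hn₀ i h]
    calc (1:ℝ) = ‖fs n₀‖ := (hfnorm n₀).symm
      _ ≤ ‖fbig‖ := by
        show ‖(fs n₀ : LinfK κ)‖ ≤ ‖(fbig : LinfK κ)‖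
        rw [lp.norm_eq_ciSup, lp.norm_eq_ciSup]
        refine ciSup_mono ⟨‖(fbig : LinfK κ)‖, ?_⟩ hpt
        rintro y ⟨i, rfl⟩
        exact lp.norm_apply_le_norm ENNReal.top_ne_zero _ i
  have hfbig_suppC : ∀ η, ((fbig : LinfK κ) : κ → ℝ) η ≠ 0 → η ∉ C := by
    intro η hη
    rw [hfbig_coe η, hFfdef] at hη
    dsimp only at hη
    by_cases h : ∃ m, m ∈ N ∧ ((fs m : LinfK κ) : κ → ℝ) η ≠ 0
    · intro hc
      exact hfsupp h.choose η h.choose_spec.2 (hCsub h.choose hc)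
    · rw [dif_neg h] at hη
      exact absurd rfl hη
  -- the decomposition estimate
  have hdecomp : ∀ n ∈ N, r - 2*δ ≤ |S fbig (xs n)| := by
    intro n hn
    set gd : ↥(linfc κ) := fbig - fs n with hgddef
    have hgd_coe : ∀ i, ((gd : LinfK κ) : κ → ℝ) i
        = Ff i - ((fs n : LinfK κ) : κ → ℝ) i := by
      intro i
      have h1 : ((gd : ↥(linfc κ)) : LinfK κ) = (fbig : LinfK κ) - (fs n : LinfK κ) := rfl
      rw [h1, lp.coeFn_sub]
      rfl
    have hgd_norm : ‖gd‖ ≤ 1 := by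
      refine linfc_norm_le_one _ (fun i => ?_)
      rw [hgd_coe i]
      by_cases h : ((fs n : LinfK κ) : κ → ℝ) i = 0
      · rw [h, sub_zero]
        exact hFb i
      · rw [hFeq n hn i h, sub_self]
        simp
    have hgd_supp : ∀ i, ((gd : LinfK κ) : κ → ℝ) i ≠ 0 →
        ∃ m ∈ N \ {n}, ((fs m : LinfK κ) : κ → ℝ) i ≠ 0 := by
      intro i hi
      rw [hgd_coe i] at hi
      by_cases h : ((fs n : LinfK κ) : κ → ℝ) i = 0
      · rw [h, sub_zero] at hi
        have h' : ∃ m, m ∈ N ∧ ((fs m : LinfK κ) : κ → ℝ) i ≠ 0 := by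
          by_contra hcon
          rw [hFfdef] at hi
          dsimp only at hi
          rw [dif_neg hcon] at hi
          exact absurd rfl hi
        refine ⟨h'.choose, ⟨h'.choose_spec.1, ?_⟩, h'.choose_spec.2⟩
        intro heq
        rw [Set.mem_singleton_iff] at heq
        exact h'.choose_spec.2 (heq ▸ h)
      · rw [hFeq n hn i h, sub_self] at hi
        exact absurd rfl hi
    have hgd_val : |S gd (xs n)| ≤ δ := by
      have hmem : |S gd (xs n)| ∈ W n (N \ {n}) := ⟨gd, hgd_norm, hgd_supp, rfl⟩
      exact (le_csSup (hWbdd n _) hmem).trans (hNval n hn)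
    have hsplit : S fbig (xs n) = S (fs n) (xs n) + S gd (xs n) := by
      have heq : fs n + gd = fbig := by
        rw [hgddef]
        abel
      rw [← heq, map_add]
      rfl
    have habs : |S (fs n) (xs n)| - |S gd (xs n)| ≤ |S (fs n) (xs n) + S gd (xs n)| := by
      have h1 := abs_sub_abs_le_abs_sub (S (fs n) (xs n)) (-(S gd (xs n)))
      rw [abs_neg, sub_neg_eq_add] at h1
      exact h1
    have hv := hval n
    rw [hsplit]
    linarith
  -- the limit point
  obtain ⟨V, hNV, hVfin⟩ := exists_nonprincipal_mem hNinf
  obtain ⟨z, hzlim⟩ := NStar.exists_lim xs V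
  have hznot : ∀ η, z ∉ clopenOf (A η) := by
    intro η hzη
    have hopen : IsOpen (clopenOf (A η)) := (isClopen_clopenOf (A η)).2
    have hmem : {n : ℕ | xs n ∈ clopenOf (A η)} ∈ (V : Filter ℕ) :=
      hzlim (hopen.mem_nhds hzη)
    have hsub : {n : ℕ | xs n ∈ clopenOf (A η)} ⊆ {n : ℕ | ξs n = η} := by
      intro n hn
      exact mem_clopenOf_unique hAD (hxmem n) hn
    have hfin : ({n : ℕ | ξs n = η}).Finite :=
      Set.Subsingleton.finite (fun a ha b hb => hξinj (ha.trans hb.symm))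
    exact hVfin _ (hfin.subset hsub) hmem
  have htendx : Filter.Tendsto (fun n => S fbig (xs n)) (V : Filter ℕ) (𝓝 (S fbig z)) :=
    ((S fbig).continuous.tendsto z).comp hzlim
  have hlim_ge : r - 2*δ ≤ |S fbig z| := by
    refine ge_of_tendsto htendx.abs ?_
    exact Filter.mem_of_superset hNV (fun n hn => hdecomp n hn)
  have hmemRV : |S fbig z| ∈ RVset A S C := ⟨fbig, hfbig_suppC, hfbig_norm, z, hznot, rfl⟩
  have hle := le_csSup (hRV_bdd C) hmemRV
  linarith
/-- for a bounded operator `S : ℓ∞^c(κ) → C(ℕ*)`, `κ` uncountable, with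
`S(1_{{ξ}}) = 1_{[A_ξ]}`, the quantity `r` (inf over countable `C` of sup of `|S(f)(x)|`
over norm-one `f` supported off `C` and `x` in some `[A_ξ]`, `ξ ∉ C`) is at most the
quantity `R` (same but with `x` outside all `[A_ξ]`). -/
theorem stmt12 {κ : Type*} [Uncountable κ] (A : κ → Set ℕ)
    (hinj : Function.Injective A)
    (hAinf : ∀ ξ, (A ξ).Infinite)
    (hAD : ∀ ξ η, ξ ≠ η → (A ξ ∩ A η).Finite)
    (S : ↥(linfc κ) →L[ℝ] BoundedContinuousFunction NStar ℝ)
    (hS : ∀ ξ, S (unitVecC ξ) = indBCF (A ξ)) :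
    sInf { t : ℝ | ∃ C : Set κ, C.Countable ∧
        t = sSup { v : ℝ | ∃ f : ↥(linfc κ),
              (∀ ξ : κ, ((f : LinfK κ) : κ → ℝ) ξ ≠ 0 → ξ ∉ C) ∧ ‖f‖ = 1 ∧
              ∃ x : NStar, (∃ ξ : κ, ξ ∉ C ∧ x ∈ clopenOf (A ξ)) ∧ v = |S f x| } } ≤
    sInf { t : ℝ | ∃ C : Set κ, C.Countable ∧
        t = sSup { v : ℝ | ∃ f : ↥(linfc κ),
              (∀ ξ : κ, ((f : LinfK κ) : κ → ℝ) ξ ≠ 0 → ξ ∉ C) ∧ ‖f‖ = 1 ∧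
              ∃ x : NStar, (∀ ξ : κ, x ∉ clopenOf (A ξ)) ∧ v = |S f x| } } := by
  refine le_csInf ⟨sSup (RVset A S ∅), ∅, Set.countable_empty, rfl⟩ ?_
  rintro t ⟨C, hC, rfl⟩
  exact key_lemma A hAinf hAD S C hC
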